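/- Let f(z) = z^D + a_2 z^{D−2} + ⋯ + a_{D−1} z + a_D be a monic centered polynomial of degree D ≥ 2 with complex coefficients, and set G^n(z) = D^{−n} log^+ |f^n(z)|. Then for every z ∈ ℂ the sequence G^n(z) converges to a limit G(z), and for all z ∈ ℂ and all n ≥ 0, |G(z) − G^n(z)| ≤ D^{−n} · log(1 + Σ_{i=2}^D |a_i|). -/

import Mathlib

open Finset

lemma eval_decomp (D : ℕ) (hD : 2 ≤ D) (f : Polynomial ℂ)
    (hmonic : f.Monic) (hdeg : f.natDegree = D) (hcent : f.coeff (D - 1) = 0) (w : ℂ) :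
    f.eval w = w ^ D + ∑ i ∈ Finset.range (D - 1), f.coeff i * w ^ i := by
  have h1 : f.coeff D = 1 := by
    have := hmonic.coeff_natDegree
    rwa [hdeg] at this
  rw [Polynomial.eval_eq_sum_range, hdeg]
  have h2 : D + 1 = (D - 1) + 1 + 1 := by omega
  rw [h2, Finset.sum_range_succ, Finset.sum_range_succ]
  have h3 : D - 1 + 1 = D := by omega
  rw [h3, h1, hcent, one_mul, zero_mul, add_zero]
  ring

lemma key_ineq (D : ℕ) (hD : 2 ≤ D) (f : Polynomial ℂ)
    (hmonic : f.Monic) (hdeg : f.natDegree = D) (hcent : f.coeff (D - 1) = 0) (w : ℂ) :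
    max (‖f.eval w‖) 1 ≤
      (1 + ∑ i ∈ Finset.range (D - 1), ‖f.coeff i‖) * (max (‖w‖) 1) ^ D ∧
    (max (‖w‖) 1) ^ D ≤
      (1 + ∑ i ∈ Finset.range (D - 1), ‖f.coeff i‖) ^ (D - 1) *
        max (‖f.eval w‖) 1 := by
  set S := ∑ i ∈ Finset.range (D - 1), ‖f.coeff i‖ with hSdef
  have hS : 0 ≤ S := Finset.sum_nonneg fun i _ => norm_nonneg _
  set t := ‖w‖ with htdef
  set M := max t 1 with hMdef
  have hM1 : (1:ℝ) ≤ M := le_max_right _ _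
  have hM0 : (0:ℝ) < M := lt_of_lt_of_le one_pos hM1
  have htM : t ≤ M := le_max_left _ _
  have ht0 : 0 ≤ t := norm_nonneg _
  have hfe := eval_decomp D hD f hmonic hdeg hcent w
  set g := ∑ i ∈ Finset.range (D - 1), f.coeff i * w ^ i with hgdef
  have hgb : ‖g‖ ≤ S * M ^ (D - 2) := by
    calc ‖g‖ ≤ ∑ i ∈ Finset.range (D - 1), ‖f.coeff i * w ^ i‖ :=
          norm_sum_le _ _
      _ ≤ ∑ i ∈ Finset.range (D - 1), ‖f.coeff i‖ * M ^ (D - 2) := by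
          apply Finset.sum_le_sum
          intro i hi
          rw [norm_mul, norm_pow]
          apply mul_le_mul_of_nonneg_left _ (norm_nonneg _)
          calc t ^ i ≤ M ^ i := pow_le_pow_left₀ ht0 htM i
            _ ≤ M ^ (D - 2) := by
                apply pow_le_pow_right₀ hM1
                simp only [Finset.mem_range] at hi; omega
      _ = S * M ^ (D - 2) := by rw [← Finset.sum_mul]
  have hMDD : M ^ (D - 2) ≤ M ^ D := pow_le_pow_right₀ hM1 (by omega)
  have hMD1 : (1:ℝ) ≤ M ^ D := one_le_pow₀ hM1
  constructor
  · -- upper bound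
    have habs : ‖f.eval w‖ ≤ (1 + S) * M ^ D := by
      rw [hfe]
      calc ‖w ^ D + g‖ ≤ ‖w ^ D‖ + ‖g‖ :=
            norm_add_le _ _
        _ ≤ t ^ D + S * M ^ (D - 2) := by rw [norm_pow]; exact add_le_add le_rfl hgb
        _ ≤ M ^ D + S * M ^ D := by
            have := pow_le_pow_left₀ ht0 htM D
            nlinarith [mul_le_mul_of_nonneg_left hMDD hS]
        _ = (1 + S) * M ^ D := by ring
    exact max_le habs (le_trans hMD1 (le_mul_of_one_le_left (by positivity) (by linarith)))
  · -- lower bound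
    have hF1 : (1:ℝ) ≤ max (‖f.eval w‖) 1 := le_max_right _ _
    have h1S : (1:ℝ) ≤ 1 + S := by linarith
    have h1Spow : (1:ℝ) ≤ (1 + S) ^ (D - 1) := one_le_pow₀ h1S
    rcases le_or_gt t 1 with ht1 | ht1
    · have : M = 1 := max_eq_right ht1
      rw [this, one_pow]
      exact one_le_mul_of_one_le_of_one_le h1Spow hF1
    · have hMt : M = t := max_eq_left (le_of_lt ht1)
      rcases le_or_gt (t ^ 2) (1 + S) with h2 | h2
      · -- small |w|: M^D ≤ (1+S)^(D-1)
        have : M ^ D ≤ (1 + S) ^ (D - 1) := by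
          rw [hMt]
          calc t ^ D ≤ t ^ (2 * (D - 1)) := pow_le_pow_right₀ (le_of_lt ht1) (by omega)
            _ = (t ^ 2) ^ (D - 1) := by rw [← pow_mul]
            _ ≤ (1 + S) ^ (D - 1) := pow_le_pow_left₀ (by positivity) h2 _
        calc M ^ D ≤ (1 + S) ^ (D - 1) := this
          _ ≤ (1 + S) ^ (D - 1) * max (‖f.eval w‖) 1 :=
              le_mul_of_one_le_right (le_trans zero_le_one h1Spow) hF1
      · -- large |w|
        have hlow : t ^ D - S * t ^ (D - 2) ≤ ‖f.eval w‖ := by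
          have h4 : t ^ D ≤ ‖f.eval w‖ + ‖g‖ := by
            have he : w ^ D = f.eval w - g := by rw [hfe]; ring
            calc t ^ D = ‖w ^ D‖ := (norm_pow _ _).symm
              _ = ‖f.eval w - g‖ := by rw [he]
              _ ≤ ‖f.eval w‖ + ‖g‖ := by
                  rw [sub_eq_add_neg]
                  exact (norm_add_le _ _).trans (by rw [norm_neg])
          have h6 : ‖g‖ ≤ S * t ^ (D - 2) := by
            have := hgb; rwa [hMt] at this
          linarith
        have hpow : t ^ (D - 2) * t ^ 2 = t ^ D := by
          rw [← pow_add]; congr 1; omega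
        have ht2 : (0:ℝ) ≤ t ^ (D - 2) := by positivity
        have hmain : t ^ D ≤ (1 + S) * ‖f.eval w‖ := by
          have haux : 0 ≤ S * t ^ (D - 2) * (t ^ 2 - 1 - S) :=
            mul_nonneg (mul_nonneg hS ht2) (by linarith)
          have haux2 : (1 + S) * (t ^ D - S * t ^ (D - 2)) ≤
              (1 + S) * ‖f.eval w‖ :=
            mul_le_mul_of_nonneg_left hlow (by linarith)
          have hpow2 : S * (t ^ (D - 2) * t ^ 2) = S * t ^ D := by rw [hpow]
          nlinarith [haux, haux2, hpow2]
        rw [hMt]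
        calc t ^ D ≤ (1 + S) * ‖f.eval w‖ := hmain
          _ ≤ (1 + S) * max (‖f.eval w‖) 1 := by
              apply mul_le_mul_of_nonneg_left (le_max_left _ _) (by linarith)
          _ ≤ (1 + S) ^ (D - 1) * max (‖f.eval w‖) 1 := by
              apply mul_le_mul_of_nonneg_right _ (le_trans zero_le_one hF1)
              calc (1 + S) = (1 + S) ^ 1 := (pow_one _).symm
                _ ≤ (1 + S) ^ (D - 1) := pow_le_pow_right₀ h1S (by omega)

lemma key_log (D : ℕ) (hD : 2 ≤ D) (f : Polynomial ℂ) (hmonic : f.Monic)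
    (hdeg : f.natDegree = D) (hcent : f.coeff (D - 1) = 0) (w : ℂ) :
    Real.log (max (‖f.eval w‖) 1) ≤
      D * Real.log (max (‖w‖) 1) +
        Real.log (1 + ∑ i ∈ Finset.range (D - 1), ‖f.coeff i‖) ∧
    (D : ℝ) * Real.log (max (‖w‖) 1) ≤
      ((D : ℝ) - 1) * Real.log (1 + ∑ i ∈ Finset.range (D - 1), ‖f.coeff i‖) +
        Real.log (max (‖f.eval w‖) 1) := by
  obtain ⟨h1, h2⟩ := key_ineq D hD f hmonic hdeg hcent w
  set S := ∑ i ∈ Finset.range (D - 1), ‖f.coeff i‖ with hSdef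
  have hS : 0 ≤ S := Finset.sum_nonneg fun i _ => norm_nonneg _
  have h1S : (0:ℝ) < 1 + S := by linarith
  set M := max (‖w‖) 1 with hMdef
  set F := max (‖f.eval w‖) 1 with hFdef
  have hM1 : (1:ℝ) ≤ M := le_max_right _ _
  have hF1 : (1:ℝ) ≤ F := le_max_right _ _
  have hM0 : (0:ℝ) < M := lt_of_lt_of_le one_pos hM1
  have hF0 : (0:ℝ) < F := lt_of_lt_of_le one_pos hF1
  have hcast : ((D - 1 : ℕ) : ℝ) = (D : ℝ) - 1 := by
    have : (1:ℕ) ≤ D := by omega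
    push_cast [Nat.cast_sub this]
    ring
  constructor
  · have := Real.log_le_log hF0 h1
    rwa [Real.log_mul (ne_of_gt h1S) (by positivity), Real.log_pow, add_comm] at this
  · have := Real.log_le_log (by positivity) h2
    rwa [Real.log_mul (by positivity) (ne_of_gt hF0), Real.log_pow, Real.log_pow, hcast]
      at this

/-- **Convergence of the escape rate with explicit error bound.**
Let `f(z) = z^D + a₂ z^{D−2} + ⋯ + a_D` be a monic centered polynomial of
degree `D ≥ 2` and set `Gⁿ(z) = D^{−n} log⁺|fⁿ(z)|`, where
`log⁺ t = log (max t 1)`.  Then for every `z` the sequence `Gⁿ(z)` converges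
to a limit `G(z)`, and for all `z` and all `n ≥ 0`,
`|G(z) − Gⁿ(z)| ≤ D^{−n} · log(1 + Σᵢ |aᵢ|)`.
(The coefficients `a₂, …, a_D` are `f.coeff (D−2), …, f.coeff 0`.) -/
theorem escape_rate_exists_with_error_bound
    (D : ℕ) (hD : 2 ≤ D) (f : Polynomial ℂ)
    (hmonic : f.Monic) (hdeg : f.natDegree = D) (hcent : f.coeff (D - 1) = 0) :
    ∃ G : ℂ → ℝ, ∀ z : ℂ,
      Filter.Tendsto
        (fun n : ℕ =>
          (D : ℝ) ^ (-(n : ℤ)) *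
            Real.log (max (‖(fun w => f.eval w)^[n] z‖) 1))
        Filter.atTop (nhds (G z)) ∧
      ∀ n : ℕ,
        |G z -
            (D : ℝ) ^ (-(n : ℤ)) *
              Real.log (max (‖(fun w => f.eval w)^[n] z‖) 1)| ≤
          (D : ℝ) ^ (-(n : ℤ)) *
            Real.log (1 + ∑ i ∈ Finset.range (D - 1), ‖f.coeff i‖) := by
  classical
  have hD2 : (2:ℝ) ≤ (D : ℝ) := by exact_mod_cast hD
  have hD0 : (0:ℝ) < (D : ℝ) := by linarith
  set S := ∑ i ∈ Finset.range (D - 1), ‖f.coeff i‖ with hSdef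
  have hS : 0 ≤ S := Finset.sum_nonneg fun i _ => norm_nonneg _
  set C := Real.log (1 + S) with hCdef
  have hC0 : 0 ≤ C := Real.log_nonneg (by linarith)
  set r := ((D : ℝ))⁻¹ with hrdef
  have hr0 : (0:ℝ) ≤ r := by positivity
  have hr1 : r < 1 := by
    rw [hrdef]
    exact inv_lt_one_of_one_lt₀ (by linarith)
  have hzp : ∀ n : ℕ, (D : ℝ) ^ (-(n : ℤ)) = r ^ n := by
    intro n
    rw [zpow_neg, zpow_natCast, hrdef, inv_pow]
  set u : ℂ → ℕ → ℝ := fun z n =>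
    r ^ n * Real.log (max (‖(fun w => f.eval w)^[n] z‖) 1) with hu
  have hrD : ∀ n : ℕ, r ^ n = r ^ (n + 1) * D := by
    intro n
    rw [pow_succ, mul_assoc, hrdef, inv_mul_cancel₀ (ne_of_gt hD0), mul_one]
  -- one-step estimate
  have hstep : ∀ z n, |u z (n + 1) - u z n| ≤ C * (r ^ n - r ^ (n + 1)) := by
    intro z n
    obtain ⟨h1, h2⟩ := key_log D hD f hmonic hdeg hcent ((fun w => f.eval w)^[n] z)
    rw [← hSdef, ← hCdef] at h1 h2
    have hit : (fun w => f.eval w)^[n + 1] z = f.eval ((fun w => f.eval w)^[n] z) :=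
      Function.iterate_succ_apply' _ _ _
    have hexp : u z (n + 1) - u z n =
        r ^ (n + 1) *
          (Real.log (max (‖f.eval ((fun w => f.eval w)^[n] z)‖) 1) -
            (D : ℝ) * Real.log (max (‖(fun w => f.eval w)^[n] z‖) 1)) := by
      simp only [hu, hit, hrD n]
      ring
    have habs : |Real.log (max (‖f.eval ((fun w => f.eval w)^[n] z)‖) 1) -
        (D : ℝ) * Real.log (max (‖(fun w => f.eval w)^[n] z‖) 1)| ≤
        ((D : ℝ) - 1) * C := by
      rw [abs_le]
      constructor
      · linarith
      · nlinarith
    have hrn : (0:ℝ) ≤ r ^ (n + 1) := pow_nonneg hr0 _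
    rw [hexp, abs_mul, abs_of_nonneg hrn]
    calc r ^ (n + 1) * |_| ≤ r ^ (n + 1) * (((D : ℝ) - 1) * C) :=
          mul_le_mul_of_nonneg_left habs hrn
      _ = C * (r ^ n - r ^ (n + 1)) := by rw [hrD n]; ring
  -- telescoping
  have htel : ∀ z n m, n ≤ m → |u z m - u z n| ≤ C * (r ^ n - r ^ m) := by
    intro z n m hnm
    induction m, hnm using Nat.le_induction with
    | base => simp
    | succ m hnm ih =>
      calc |u z (m + 1) - u z n| ≤ |u z (m + 1) - u z m| + |u z m - u z n| := by
            have := abs_sub_le (u z (m + 1)) (u z m) (u z n)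
            linarith
        _ ≤ C * (r ^ m - r ^ (m + 1)) + C * (r ^ n - r ^ m) :=
            add_le_add (hstep z m) ih
        _ = C * (r ^ n - r ^ (m + 1)) := by ring
  -- Cauchy
  have hcau : ∀ z, CauchySeq (u z) := by
    intro z
    apply cauchySeq_of_le_geometric r (C * (1 - r)) hr1
    intro n
    rw [Real.dist_eq, abs_sub_comm]
    calc |u z (n + 1) - u z n| ≤ C * (r ^ n - r ^ (n + 1)) := hstep z n
      _ = C * (1 - r) * r ^ n := by rw [pow_succ]; ring
  have hex : ∀ z, ∃ l, Filter.Tendsto (u z) Filter.atTop (nhds l) := fun z =>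
    cauchySeq_tendsto_of_complete (hcau z)
  choose G hG using hex
  refine ⟨G, fun z => ⟨?_, ?_⟩⟩
  · have heq : (fun n : ℕ =>
        (D : ℝ) ^ (-(n : ℤ)) *
          Real.log (max (‖(fun w => f.eval w)^[n] z‖) 1)) = u z :=
      funext fun n => by rw [hzp n]
    rw [heq]
    exact hG z
  · intro n
    rw [hzp n]
    show |G z - u z n| ≤ r ^ n * C
    have hlim : Filter.Tendsto (fun m => |u z m - u z n|) Filter.atTop
        (nhds |G z - u z n|) := ((hG z).sub_const (u z n)).abs
    apply le_of_tendsto hlim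
    filter_upwards [Filter.eventually_ge_atTop n] with m hm
    calc |u z m - u z n| ≤ C * (r ^ n - r ^ m) := htel z n m hm
      _ ≤ r ^ n * C := by nlinarith [pow_nonneg hr0 m]
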